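/- In the π-calculus-style conflict structure, a ⋆-pattern does exist: there exist five steps whose cyclically adjacent pairs are in conflict and whose non-adjacent pairs are distributable, using five choices where each step connects two choices with no endpoint-duality restriction. -/
import Mathlib


/-- the set of choices of a step (an unordered pair, modelled as a pair) -/
def ChoiceSet (s : Fin 5 × Fin 5) : Set (Fin 5) := {s.1, s.2}

/-- a π-calculus style step: two distinct choices, no endpoint-duality restriction -/
def ValidStep (s : Fin 5 × Fin 5) : Prop := s.1 ≠ s.2

/-- conflict: the steps share a choice -/
def Conflict (s t : Fin 5 × Fin 5) : Prop := (ChoiceSet s ∩ ChoiceSet t).Nonempty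

/-- distributable: no shared choice -/
def Distributable (s t : Fin 5 × Fin 5) : Prop := ChoiceSet s ∩ ChoiceSet t = ∅

theorem star_pattern_exists_in_pi :
    ∃ sa sb sc sd se : Fin 5 × Fin 5,
      ValidStep sa ∧ ValidStep sb ∧ ValidStep sc ∧ ValidStep sd ∧ ValidStep se ∧
      Conflict sa sb ∧ Conflict sb sc ∧ Conflict sc sd ∧ Conflict sd se ∧
      Conflict se sa ∧
      Distributable sa sc ∧ Distributable sa sd ∧ Distributable sb sd ∧
      Distributable sb se ∧ Distributable sc se := by
  refine ⟨(0,1),(1,2),(2,3),(3,4),(4,0), by simp [ValidStep], by simp [ValidStep], by simp [ValidStep], by simp [ValidStep], by simp [ValidStep], ⟨1, by simp [ChoiceSet]⟩, ⟨2, by simp [ChoiceSet]⟩, ⟨3, by simp [ChoiceSet]⟩, ⟨4, by simp [ChoiceSet]⟩, ⟨0, by simp [ChoiceSet]⟩, ?_, ?_, ?_, ?_, ?_⟩ <;>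
  · ext x
    simp only [Distributable, ChoiceSet, Set.mem_inter_iff, Set.mem_insert_iff, Set.mem_singleton_iff, Set.mem_empty_iff_false, iff_false]
    fin_cases x <;> decide
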